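/- Assume J_{x,y} = 0 for all x, y ∈ V, so that H(σ) = -∑_{x∈V} h_x σ_x is subject only to the external fields. Then for every β > 0, the Gibbs distribution π_β^G is stationary for P_β^{DA}, i.e. ∑_{τ∈Ω} π_β^G(τ) P_β^{DA}(τ, σ) = π_β^G(σ) for all σ ∈ Ω. -/

import Mathlib

open Finset Filter
open scoped Classical

noncomputable section

/-- The real spin value of a Boolean spin: `true ↦ +1`, `false ↦ -1`. -/
def spin (b : Bool) : ℝ := if b then 1 else -1

variable {V : Type*} [Fintype V] [DecidableEq V]

/-- The configuration obtained from `σ` by flipping the spin at `x`. -/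
def flipConf (σ : V → Bool) (x : V) : V → Bool := Function.update σ x (!(σ x))

/-- The Ising Hamiltonian with couplings `J` and external fields `h`. -/
def Ham (J : V → V → ℝ) (h : V → ℝ) (σ : V → Bool) : ℝ :=
  -(1 / 2) * ∑ x : V, ∑ y : V, J x y * spin (σ x) * spin (σ y)
    - ∑ x : V, h x * spin (σ x)

/-- `Ecost J h x σ = H(σ^x) - H(σ)`, the energetic cost of flipping the spin at `x`. -/
def Ecost (J : V → V → ℝ) (h : V → ℝ) (x : V) (σ : V → Bool) : ℝ :=
  Ham J h (flipConf σ x) - Ham J h σ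

/-- Metropolis acceptance probability `exp(-β E_y(σ)^+)`. -/
def acc (J : V → V → ℝ) (h : V → ℝ) (β : ℝ) (σ : V → Bool) (y : V) : ℝ :=
  Real.exp (-β * max (Ecost J h y σ) 0)

/-- The Digital Annealer transition matrix. -/
def Pda (J : V → V → ℝ) (h : V → ℝ) (β : ℝ) (σ τ : V → Bool) : ℝ :=
  if τ = σ then ∏ y : V, (1 - acc J h β σ y)
  else ∑ x ∈ Finset.univ.filter (fun x => τ = flipConf σ x),
        ∑ S ∈ Finset.univ.powerset.filter (fun S : Finset V => x ∈ S),
          ((S.card : ℝ))⁻¹ * (∏ y ∈ S, acc J h β σ y) * ∏ y ∈ Sᶜ, (1 - acc J h β σ y)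

/-- The Gibbs distribution at inverse temperature `β`. -/
def gibbs (J : V → V → ℝ) (h : V → ℝ) (β : ℝ) (σ : V → Bool) : ℝ :=
  Real.exp (-β * Ham J h σ) / ∑ τ : V → Bool, Real.exp (-β * Ham J h τ)

/-- The quantity `R(σ, σ^x)` from the paper. -/
def Rw (J : V → V → ℝ) (h : V → ℝ) (β : ℝ) (σ : V → Bool) (x : V) : ℝ :=
  ∑ S ∈ (Finset.univ.erase x).powerset,
    ((S.card : ℝ) + 1)⁻¹ * (∏ y ∈ S, acc J h β σ y) *
      ∏ y ∈ (Finset.univ.erase x) \ S, (1 - acc J h β σ y)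

/-- `τ` is reachable from `σ` at height `E`. -/
def Reachable (H : (V → Bool) → ℝ) (E : ℝ) (σ τ : V → Bool) : Prop :=
  (σ = τ ∧ H σ ≤ E) ∨
    ∃ n : ℕ, 1 ≤ n ∧ ∃ p : ℕ → (V → Bool), p 0 = σ ∧ p n = τ ∧
      (∀ k, 1 ≤ k → k ≤ n → ∃ x, p k = flipConf (p (k - 1)) x) ∧
      (∀ i ≤ n, H (p i) ≤ E)

/-- `σ` is a local minimum of `H`. -/
def IsLocMin (H : (V → Bool) → ℝ) (σ : V → Bool) : Prop :=
  ¬ ∃ τ, H τ < H σ ∧ Reachable H (H σ) σ τ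

/-- `σ` is a ground state (global minimum) of `H`. -/
def IsGround (H : (V → Bool) → ℝ) (σ : V → Bool) : Prop := ∀ τ, H σ ≤ H τ

/-- The depth of a local minimum which is not a ground state: the smallest `E > 0` such
that some strictly lower state is reachable from `σ` at height `H(σ) + E`. -/
def depth (H : (V → Bool) → ℝ) (σ : V → Bool) : ℝ :=
  sInf {E : ℝ | 0 < E ∧ ∃ τ, H τ < H σ ∧ Reachable H (H σ + E) σ τ}

/-- `γ*`: the maximum of the depths of the local minima of `H` that are not ground
states (`0` if every local minimum is a ground state). -/
def gammaStar (H : (V → Bool) → ℝ) : ℝ :=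
  sSup ({0} ∪ {d : ℝ | ∃ σ, IsLocMin H σ ∧ ¬ IsGround H σ ∧ d = depth H σ})

end

section Aux

variable {V : Type*} [Fintype V] [DecidableEq V]

lemma spin_not (b : Bool) : spin (!b) = - spin b := by cases b <;> simp [spin]

lemma flip_apply_self (σ : V → Bool) (x : V) : flipConf σ x x = !(σ x) := by
  simp [flipConf]

lemma flip_apply_ne (σ : V → Bool) {x y : V} (hxy : y ≠ x) : flipConf σ x y = σ y := by
  simp [flipConf, Function.update, hxy]

lemma flipConf_flip_flip (σ : V → Bool) (x : V) : flipConf (flipConf σ x) x = σ := by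
  funext z
  by_cases hz : z = x
  · subst hz; simp [flipConf]
  · rw [flip_apply_ne _ hz, flip_apply_ne _ hz]

lemma flip_ne (σ : V → Bool) (x : V) : flipConf σ x ≠ σ := by
  intro hc
  have := congrFun hc x
  rw [flip_apply_self] at this
  simp at this

lemma flip_inj (σ : V → Bool) {x y : V} (hc : flipConf σ x = flipConf σ y) : x = y := by
  by_contra hxy
  have := congrFun hc x
  rw [flip_apply_self, flip_apply_ne σ hxy] at this
  simp at this

lemma Ham_eq {J : V → V → ℝ} {h : V → ℝ} (hJ : ∀ x y, J x y = 0) (σ : V → Bool) :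
    Ham J h σ = - ∑ x : V, h x * spin (σ x) := by
  simp [Ham, hJ]

lemma Ecost_eq {J : V → V → ℝ} {h : V → ℝ} (hJ : ∀ x y, J x y = 0) (y : V) (σ : V → Bool) :
    Ecost J h y σ = 2 * h y * spin (σ y) := by
  have key : ∀ z, h z * spin (flipConf σ y z)
      = Function.update (fun z => h z * spin (σ z)) y (h y * spin (!(σ y))) z := by
    intro z
    by_cases hz : z = y
    · subst hz; simp [flipConf, Function.update]
    · simp [flipConf, Function.update, hz]
  rw [Ecost, Ham_eq hJ, Ham_eq hJ,
    Finset.sum_congr rfl (fun z _ => key z),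
    Finset.sum_update_of_mem (Finset.mem_univ y),
    ← Finset.add_sum_erase Finset.univ (fun z => h z * spin (σ z)) (Finset.mem_univ y),
    spin_not, Finset.sdiff_singleton_eq_erase]
  ring

lemma acc_flip_ne {J : V → V → ℝ} {h : V → ℝ} (hJ : ∀ x y, J x y = 0) (β : ℝ)
    (σ : V → Bool) {x y : V} (hyx : y ≠ x) :
    acc J h β (flipConf σ x) y = acc J h β σ y := by
  rw [acc, acc, Ecost_eq hJ, Ecost_eq hJ, flip_apply_ne σ hyx]

lemma Ecost_flip_self (J : V → V → ℝ) (h : V → ℝ) (x : V) (σ : V → Bool) :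
    Ecost J h x (flipConf σ x) = - Ecost J h x σ := by
  rw [Ecost, Ecost, flipConf_flip_flip]
  ring

lemma gibbs_mul_acc (J : V → V → ℝ) (h : V → ℝ) (β : ℝ) (σ : V → Bool) (x : V) :
    gibbs J h β σ * acc J h β σ x
      = gibbs J h β (flipConf σ x) * acc J h β (flipConf σ x) x := by
  unfold gibbs acc
  rw [Ecost_flip_self, div_mul_eq_mul_div, div_mul_eq_mul_div, ← Real.exp_add, ← Real.exp_add]
  congr 2
  have hE : Ham J h (flipConf σ x) = Ham J h σ + Ecost J h x σ := by rw [Ecost]; ring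
  rw [hE]
  rcases le_total (Ecost J h x σ) 0 with hc | hc
  · rw [max_eq_right hc, max_eq_left (by linarith : (0:ℝ) ≤ -Ecost J h x σ)]; ring
  · rw [max_eq_left hc, max_eq_right (by linarith : -Ecost J h x σ ≤ 0)]; ring

lemma Pda_flip' (J : V → V → ℝ) (h : V → ℝ) (β : ℝ) (σ : V → Bool) (x : V) :
    Pda J h β σ (flipConf σ x)
      = ∑ S ∈ Finset.univ.powerset.filter (fun S : Finset V => x ∈ S),
          ((S.card : ℝ))⁻¹ * (∏ y ∈ S, acc J h β σ y) * ∏ y ∈ Sᶜ, (1 - acc J h β σ y) := by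
  rw [Pda, if_neg (flip_ne σ x)]
  have hfilt : Finset.univ.filter (fun x' => flipConf σ x = flipConf σ x') = {x} := by
    ext x'
    simp only [Finset.mem_filter, Finset.mem_univ, true_and, Finset.mem_singleton]
    constructor
    · intro hc; exact (flip_inj σ hc).symm
    · rintro rfl; rfl
  rw [hfilt, Finset.sum_singleton]

lemma Pda_flip (J : V → V → ℝ) (h : V → ℝ) (β : ℝ) (σ : V → Bool) (x : V) :
    Pda J h β σ (flipConf σ x) = acc J h β σ x * Rw J h β σ x := by
  rw [Pda_flip', Rw, Finset.mul_sum]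
  refine Finset.sum_nbij' (i := fun S => S.erase x) (j := fun T => insert x T)
    ?_ ?_ ?_ ?_ ?_
  · intro S hS
    simp only [Finset.mem_filter, Finset.mem_powerset] at hS
    simp only [Finset.mem_powerset]
    intro y hy
    exact Finset.mem_erase.2 ⟨(Finset.mem_erase.1 hy).1, Finset.mem_univ y⟩
  · intro T hT
    simp only [Finset.mem_powerset] at hT
    simp only [Finset.mem_filter, Finset.mem_powerset]
    exact ⟨Finset.subset_univ _, Finset.mem_insert_self x T⟩
  · intro S hS
    simp only [Finset.mem_filter, Finset.mem_powerset] at hS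
    exact Finset.insert_erase hS.2
  · intro T hT
    simp only [Finset.mem_powerset] at hT
    refine Finset.erase_insert ?_
    intro hx
    exact (Finset.mem_erase.1 (hT hx)).1 rfl
  · intro S hS
    simp only [Finset.mem_filter, Finset.mem_powerset] at hS
    have hxS : x ∈ S := hS.2
    have hcard : (S.card : ℝ) = ((S.erase x).card : ℝ) + 1 := by
      exact_mod_cast (Finset.card_erase_add_one hxS).symm
    have hprod : ∏ y ∈ S, acc J h β σ y
        = acc J h β σ x * ∏ y ∈ S.erase x, acc J h β σ y :=
      (Finset.mul_prod_erase S _ hxS).symm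
    have hcompl : Sᶜ = (Finset.univ.erase x) \ (S.erase x) := by
      ext y
      simp only [Finset.mem_compl, Finset.mem_sdiff, Finset.mem_erase, Finset.mem_univ,
        and_true, true_and]
      constructor
      · intro hy
        refine ⟨fun hyx => hy (hyx ▸ hxS), fun hc => hy hc.2⟩
      · rintro ⟨hyx, hc⟩ hyS
        exact hc ⟨hyx, hyS⟩
    rw [hcard, hprod, hcompl]
    ring

lemma Rw_flip {J : V → V → ℝ} {h : V → ℝ} (hJ : ∀ x y, J x y = 0) (β : ℝ)
    (σ : V → Bool) (x : V) :
    Rw J h β (flipConf σ x) x = Rw J h β σ x := by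
  unfold Rw
  refine Finset.sum_congr rfl ?_
  intro S hS
  simp only [Finset.mem_powerset] at hS
  have h1 : ∀ y ∈ S, acc J h β (flipConf σ x) y = acc J h β σ y := by
    intro y hy
    exact acc_flip_ne hJ β σ (Finset.mem_erase.1 (hS hy)).1
  have h2 : ∀ y ∈ (Finset.univ.erase x) \ S,
      1 - acc J h β (flipConf σ x) y = 1 - acc J h β σ y := by
    intro y hy
    rw [acc_flip_ne hJ β σ (Finset.mem_erase.1 (Finset.mem_sdiff.1 hy).1).1]
  rw [Finset.prod_congr rfl h1, Finset.prod_congr rfl h2]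

lemma Pda_rowsum (J : V → V → ℝ) (h : V → ℝ) (β : ℝ) (σ : V → Bool) :
    ∑ τ : V → Bool, Pda J h β σ τ = 1 := by
  classical
  set a : V → ℝ := acc J h β σ with ha
  -- split off the diagonal
  rw [← Finset.add_sum_erase Finset.univ _ (Finset.mem_univ σ)]
  have himg : Finset.image (flipConf σ) Finset.univ ⊆ Finset.univ.erase σ := by
    intro τ hτ
    obtain ⟨x, _, rfl⟩ := Finset.mem_image.1 hτ
    exact Finset.mem_erase.2 ⟨flip_ne σ x, Finset.mem_univ _⟩
  have hzero : ∀ τ ∈ Finset.univ.erase σ, τ ∉ Finset.image (flipConf σ) Finset.univ →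
      Pda J h β σ τ = 0 := by
    intro τ hτ hτ'
    have hne : τ ≠ σ := (Finset.mem_erase.1 hτ).1
    rw [Pda, if_neg hne]
    have : Finset.univ.filter (fun x => τ = flipConf σ x) = ∅ := by
      rw [Finset.filter_eq_empty_iff]
      intro x _ hc
      exact hτ' (Finset.mem_image.2 ⟨x, Finset.mem_univ x, hc.symm⟩)
    rw [this, Finset.sum_empty]
  rw [← Finset.sum_subset himg hzero, Finset.sum_image (fun x _ y _ hxy => flip_inj σ hxy)]
  have hterm : ∀ x : V, Pda J h β σ (flipConf σ x)
      = ∑ S ∈ Finset.univ.powerset.filter (fun S : Finset V => x ∈ S),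
          ((S.card : ℝ))⁻¹ * (∏ y ∈ S, a y) * ∏ y ∈ Sᶜ, (1 - a y) := fun x =>
    Pda_flip' J h β σ x
  rw [Finset.sum_congr rfl fun x _ => hterm x]
  -- swap the sums
  rw [Finset.sum_comm' (s' := fun S : Finset V => S)
    (t' := (Finset.univ : Finset V).powerset)
    (h := by
      intro x S
      simp only [Finset.mem_univ, true_and, Finset.mem_filter, Finset.mem_powerset,
        and_true, Finset.subset_univ, and_comm])]
  have hempty : (∅ : Finset V) ∈ (Finset.univ : Finset V).powerset :=
    Finset.mem_powerset.2 (Finset.empty_subset _)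
  rw [show Pda J h β σ σ = (∏ y ∈ (∅ : Finset V), a y) * ∏ y ∈ Finset.univ \ (∅ : Finset V), (1 - a y) by
    rw [Pda, if_pos rfl]; simp [ha]]
  rw [← Finset.add_sum_erase _
      (fun S : Finset V => ∑ _x ∈ S, ((S.card : ℝ))⁻¹ * (∏ y ∈ S, a y) * ∏ y ∈ Sᶜ, (1 - a y))
      hempty]
  simp only [Finset.sum_empty, add_zero, zero_add]
  have hstep : ∀ S ∈ ((Finset.univ : Finset V).powerset).erase ∅,
      (∑ _x ∈ S, ((S.card : ℝ))⁻¹ * (∏ y ∈ S, a y) * ∏ y ∈ Sᶜ, (1 - a y))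
        = (∏ y ∈ S, a y) * ∏ y ∈ Finset.univ \ S, (1 - a y) := by
    intro S hS
    have hSne : S ≠ ∅ := (Finset.mem_erase.1 hS).1
    have hcard : (S.card : ℝ) ≠ 0 := by
      simp only [ne_eq, Nat.cast_eq_zero, Finset.card_eq_zero]
      exact hSne
    rw [Finset.sum_const, nsmul_eq_mul, Finset.compl_eq_univ_sdiff]
    field_simp
  rw [Finset.sum_congr rfl hstep,
    Finset.add_sum_erase _ (fun S : Finset V => (∏ y ∈ S, a y) * ∏ y ∈ Finset.univ \ S, (1 - a y))
      hempty,
    ← Finset.prod_add a (fun y => 1 - a y) Finset.univ]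
  simp

lemma detailed_balance {J : V → V → ℝ} {h : V → ℝ} (hJ : ∀ x y, J x y = 0) (β : ℝ)
    (σ τ : V → Bool) :
    gibbs J h β τ * Pda J h β τ σ = gibbs J h β σ * Pda J h β σ τ := by
  by_cases hστ : τ = σ
  · subst hστ; rfl
  by_cases hx : ∃ x, τ = flipConf σ x
  · obtain ⟨x, rfl⟩ := hx
    have hστ' : σ = flipConf (flipConf σ x) x := (flipConf_flip_flip σ x).symm
    rw [Pda_flip J h β σ x]
    have hP : Pda J h β (flipConf σ x) σ
        = acc J h β (flipConf σ x) x * Rw J h β (flipConf σ x) x := by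
      have := Pda_flip J h β (flipConf σ x) x
      rwa [flipConf_flip_flip] at this
    calc gibbs J h β (flipConf σ x) * Pda J h β (flipConf σ x) σ
        = gibbs J h β (flipConf σ x)
            * (acc J h β (flipConf σ x) x * Rw J h β (flipConf σ x) x) := by
          rw [hP]
      _ = (gibbs J h β (flipConf σ x) * acc J h β (flipConf σ x) x) * Rw J h β σ x := by
          rw [Rw_flip hJ β σ x]; ring
      _ = (gibbs J h β σ * acc J h β σ x) * Rw J h β σ x := by
          rw [← gibbs_mul_acc J h β σ x]
      _ = gibbs J h β σ * (acc J h β σ x * Rw J h β σ x) := by ring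
  · have h1 : Pda J h β σ τ = 0 := by
      rw [Pda, if_neg hστ]
      have : Finset.univ.filter (fun x => τ = flipConf σ x) = ∅ := by
        rw [Finset.filter_eq_empty_iff]
        intro x _ hc
        exact hx ⟨x, hc⟩
      rw [this, Finset.sum_empty]
    have h2 : Pda J h β τ σ = 0 := by
      rw [Pda, if_neg (fun hc => hστ hc.symm)]
      have : Finset.univ.filter (fun x => σ = flipConf τ x) = ∅ := by
        rw [Finset.filter_eq_empty_iff]
        intro x _ hc
        exact hx ⟨x, by rw [hc, flipConf_flip_flip]⟩
      rw [this, Finset.sum_empty]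
    rw [h1, h2, mul_zero, mul_zero]

end Aux

theorem gibbs_stationary_of_no_couplings
    {V : Type*} [Fintype V] [DecidableEq V] [Nonempty V]
    (J : V → V → ℝ) (h : V → ℝ) (hJ : ∀ x y, J x y = 0)
    (β : ℝ) (hβ : 0 < β) (σ : V → Bool) :
    ∑ τ : V → Bool, gibbs J h β τ * Pda J h β τ σ = gibbs J h β σ := by
  calc ∑ τ : V → Bool, gibbs J h β τ * Pda J h β τ σ
      = ∑ τ : V → Bool, gibbs J h β σ * Pda J h β σ τ :=
        Finset.sum_congr rfl fun τ _ => detailed_balance hJ β σ τ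
    _ = gibbs J h β σ * ∑ τ : V → Bool, Pda J h β σ τ := by rw [Finset.mul_sum]
    _ = gibbs J h β σ := by rw [Pda_rowsum, mul_one]
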